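/- Let d ≥ 4, n ≥ 2, and let f = [0 : H_f] ∈ Rat_d^s ∩ I(d), i.e., f = H_f·[0:1] where H_f ∈ ℂ[X,Y] is homogeneous of degree d with H_f(0,1) = 0 (so f̂ ≡ [0:1] and [0:1] is a hole of f) and f is stable. For t ∈ ℂ ∖ {0} let g_t = H_f·[t : 1] = [t·H_f : H_f] ∈ ℙ^{2d+1}. Then: (i) g_t → f in ℙ^{2d+1} as t → 0; (ii) for all but finitely many t, g_t ∉ I(d) and g_t^n = (H_f)^{dⁿ⁻¹}·[t : 1] in ℙ^{2dⁿ+1}; (iii) g_t^n → g_n := (H_f)^{dⁿ⁻¹}·[0 : 1] in ℙ^{2dⁿ+1} as t → 0; and (iv) g_n ∈ Rat_{dⁿ}^s, with d_{[0:1]}(g_n) = dⁿ⁻¹·d_{[0:1]}(f). -/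

import Mathlib

open MvPolynomial Filter Topology
open scoped Classical

noncomputable section

/-- Binary forms: polynomials in `X 0, X 1` over `ℂ`. A pair of homogeneous elements of
degree `d`, not both zero, represents a point of `ℙ^{2d+1}`. -/
abbrev MP : Type := MvPolynomial (Fin 2) ℂ

noncomputable instance : NormalizationMonoid MP :=
  UniqueFactorizationMonoid.strongNormalizationMonoid.toNormalizationMonoid

noncomputable instance : NormalizedGCDMonoid MP :=
  UniqueFactorizationMonoid.toNormalizedGCDMonoid MP

/-- The complex projective line `ℙ¹(ℂ)`. -/
abbrev P1 : Type := Projectivization ℂ (Fin 2 → ℂ)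

/-- A linear form vanishing exactly at the projective point `z`. -/
noncomputable def linForm (z : P1) : MP :=
  C (z.rep 1) * X 0 - C (z.rep 0) * X 1

/-- Multiplicity of `z` as a zero of the binary form `H`. -/
noncomputable def rootMult (H : MP) (z : P1) : ℕ :=
  sSup {k : ℕ | linForm z ^ k ∣ H}

/-- `H_f = gcd(P, Q)` for `f = [P : Q]`. -/
noncomputable def Hgcd (f : MP × MP) : MP := gcd f.1 f.2

/-- The depth `d_z(f)` of `z` as a hole of `f`: multiplicity of `z` as a zero of `H_f`. -/
noncomputable def depthP (f : MP × MP) (z : P1) : ℕ := rootMult (Hgcd f) z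

/-- `z` is a hole of `f`, i.e. a zero of `H_f`. -/
def IsHole (f : MP × MP) (z : P1) : Prop := linForm z ∣ Hgcd f

/-- The induced map `f̂ = [P / H_f : Q / H_f]` as a pair of binary forms. -/
noncomputable def fhat (f : MP × MP) : MP × MP :=
  ((dvd_def.mp (gcd_dvd_left f.1 f.2)).choose,
   (dvd_def.mp (gcd_dvd_right f.1 f.2)).choose)

/-- A pair of binary forms acting as a self-map of `ℙ¹` (junk value `z` where undefined). -/
noncomputable def apply₁ (g : MP × MP) (z : P1) : P1 :=
  if h : (![eval z.rep g.1, eval z.rep g.2] : Fin 2 → ℂ) ≠ 0 then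
    Projectivization.mk ℂ _ h
  else z

/-- The induced map `f̂` as a self-map of `ℙ¹`. -/
noncomputable def fhatFun (f : MP × MP) : P1 → P1 := apply₁ (fhat f)

/-- The induced map of `f` is constant. -/
def ConstHat (f : MP × MP) : Prop := ∃ c : P1, ∀ z : P1, fhatFun f z = c

/-- Local multiplicity `m_z(g)` of the rational map `[g.1 : g.2]` at `z`
(equal to `0` when the map is constant). -/
noncomputable def multAt (g : MP × MP) (z : P1) : ℕ :=
  rootMult (C (eval z.rep g.2) * g.1 - C (eval z.rep g.1) * g.2) z

/-- Local multiplicity `m_z(f̂)` of the induced map of `f` at `z`. -/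
noncomputable def hatMult (f : MP × MP) (z : P1) : ℕ := multAt (fhat f) z

/-- Composition of pairs of binary forms (homogeneous representatives). -/
noncomputable def comp2 (f g : MP × MP) : MP × MP :=
  (aeval ![g.1, g.2] f.1, aeval ![g.1, g.2] f.2)

/-- The iterate `f^n` as a pair of binary forms (canonical homogeneous representative). -/
noncomputable def iterPair (f : MP × MP) : ℕ → MP × MP
  | 0 => (X 0, X 1)
  | n + 1 => comp2 f (iterPair f n)

/-- GIT semistability of a degree-`d` point `f` of `ℙ^{2d+1}`. -/
def Semistable (d : ℕ) (f : MP × MP) : Prop :=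
  (∀ z : P1, (depthP f z : ℚ) ≤ ((d : ℚ) + 1) / 2) ∧
  ∀ h : P1, (d : ℚ) / 2 ≤ (depthP f h : ℚ) → fhatFun f h ≠ h

/-- GIT stability of a degree-`d` point `f` of `ℙ^{2d+1}`. -/
def Stable (d : ℕ) (f : MP × MP) : Prop :=
  (∀ z : P1, (depthP f z : ℚ) ≤ (d : ℚ) / 2) ∧
  ∀ h : P1, ((d : ℚ) - 1) / 2 ≤ (depthP f h : ℚ) → fhatFun f h ≠ h

/-- The indeterminacy locus `I(d)`: the induced map is a constant `c` which is a hole. -/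
def Idet (f : MP × MP) : Prop :=
  ∃ c : P1, (∀ z : P1, fhatFun f z = c) ∧ IsHole f c

/-- The set `U_n` of `n`-unstable maps. -/
def Unstable (d n : ℕ) (f : MP × MP) : Prop :=
  Semistable d f ∧ ¬ Idet f ∧ ¬ Semistable (d ^ n) (iterPair f n)

/-- `f` is a representative of a point of `ℙ^{2d+1}`: a pair of homogeneous binary
forms of degree `d`, not both zero. -/
def IsRatRep (d : ℕ) (f : MP × MP) : Prop :=
  f.1.IsHomogeneous d ∧ f.2.IsHomogeneous d ∧ f ≠ 0

/-- Projective equality of pairs of binary forms. -/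
def ProjEq (f g : MP × MP) : Prop := ∃ c : ℂ, c ≠ 0 ∧ g = (C c * f.1, C c * f.2)

/-- The point `∞ = [1 : 0]` of `ℙ¹`. -/
noncomputable def infty : P1 :=
  Projectivization.mk ℂ ![1, 0] (by
    intro h
    simpa using congrFun h 0)

/-- The point `[a : 1]` of `ℙ¹`. -/
noncomputable def ptc (a : ℂ) : P1 :=
  Projectivization.mk ℂ ![a, 1] (by
    intro h
    simpa using congrFun h 1)

/-- The degree of a pair of binary forms. -/
def pairDeg (g : MP × MP) : ℕ := max g.1.totalDegree g.2.totalDegree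

end

noncomputable section Helpers

open MvPolynomial

lemma CCmap (c : ℂ) : (algebraMap ℂ MP) c = C c := rfl

lemma prime_X0 : Prime (X 0 : MP) := by
  rw [← MulEquiv.prime_iff (e := (MvPolynomial.finSuccEquiv ℂ 1).toMulEquiv)]
  have : (MvPolynomial.finSuccEquiv ℂ 1).toMulEquiv (X 0 : MP) = Polynomial.X :=
    finSuccEquiv_X_zero
  rw [this]
  exact Polynomial.prime_X

lemma prime_X1 : Prime (X 1 : MP) := by
  rw [← MulEquiv.prime_iff (e := (renameEquiv ℂ (Equiv.swap (0:Fin 2) 1)).toMulEquiv)]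
  have : (renameEquiv ℂ (Equiv.swap (0:Fin 2) 1)).toMulEquiv (X 1 : MP) = X 0 := by
    show rename _ (X 1) = X 0
    rw [rename_X, Equiv.swap_apply_right]
  rw [this]
  exact prime_X0

/-- Shear automorphism. -/
def shear (a b : ℂ) (ha : a ≠ 0) : MP ≃ₐ[ℂ] MP :=
  AlgEquiv.ofAlgHom (aeval ![C a⁻¹ * (X 0 + C b * X 1), X 1])
    (aeval ![C a * X 0 - C b * X 1, X 1])
    (by
      apply algHom_ext
      intro i
      fin_cases i
      · simp only [AlgHom.comp_apply, aeval_X, AlgHom.id_apply, Fin.zero_eta, Fin.isValue,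
          Matrix.cons_val_zero, Matrix.cons_val_one, Matrix.head_cons, map_sub, map_mul, aeval_C]
        rw [CCmap, CCmap, ← mul_assoc, ← map_mul, mul_inv_cancel₀ ha, map_one, one_mul]
        ring
      · simp)
    (by
      apply algHom_ext
      intro i
      fin_cases i
      · simp only [AlgHom.comp_apply, aeval_X, AlgHom.id_apply, Fin.zero_eta, Fin.isValue,
          Matrix.cons_val_zero, Matrix.cons_val_one, Matrix.head_cons, map_add, map_mul, aeval_C]
        rw [CCmap, CCmap, show C a * X 0 - C b * X 1 + C b * X 1 = C a * (X 0 : MP) by ring,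
          ← mul_assoc, ← map_mul, inv_mul_cancel₀ ha, map_one, one_mul]
      · simp)

lemma prime_lin (a b : ℂ) (hab : a ≠ 0 ∨ b ≠ 0) : Prime (C a * X 0 - C b * X 1 : MP) := by
  by_cases ha : a ≠ 0
  · rw [← MulEquiv.prime_iff (e := (shear a b ha).toMulEquiv)]
    have : (shear a b ha).toMulEquiv (C a * X 0 - C b * X 1 : MP) = X 0 := by
      show (aeval ![C a⁻¹ * (X 0 + C b * X 1), X 1] : MP →ₐ[ℂ] MP) _ = _
      simp only [map_sub, map_mul, aeval_C, aeval_X, Fin.isValue, Matrix.cons_val_zero,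
        Matrix.cons_val_one, Matrix.head_cons]
      rw [CCmap, CCmap, ← mul_assoc, ← map_mul, mul_inv_cancel₀ ha, map_one, one_mul]
      ring
    rw [this]
    exact prime_X0
  · push_neg at ha
    subst ha
    have hb : b ≠ 0 := by tauto
    have h1 : (C (0:ℂ) * X 0 - C b * X 1 : MP) = C (-b) * X 1 := by
      rw [map_zero, zero_mul, zero_sub, map_neg, neg_mul]
    rw [h1]
    have hu : IsUnit (C (-b) : MP) := (isUnit_iff_ne_zero.mpr (neg_ne_zero.mpr hb)).map C
    exact (Associated.prime ⟨hu.unit, by rw [IsUnit.unit_spec, mul_comm]⟩ prime_X1)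

lemma prime_linForm (z : P1) : Prime (linForm z) := by
  apply prime_lin
  by_contra hc
  push_neg at hc
  apply Projectivization.rep_nonzero z
  funext i
  fin_cases i
  · exact hc.2
  · exact hc.1

lemma eval_rep_linForm (z : P1) : eval z.rep (linForm z) = 0 := by
  simp only [linForm, map_sub, map_mul, eval_C, eval_X]
  ring

lemma aeval_XX (p : MP) : aeval ![X 0, X 1] p = p := by
  have : (aeval ![X 0, X 1] : MP →ₐ[ℂ] MP) = AlgHom.id ℂ MP := by
    apply algHom_ext
    intro i
    fin_cases i <;> simp
  exact congrFun (congrArg DFunLike.coe this) p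

lemma aeval_C_comp (v : Fin 2 → ℂ) (p : MP) :
    aeval (fun i => (C (v i) : MP)) p = C (eval v p) := by
  induction p using MvPolynomial.induction_on with
  | C a => simp
  | add p q hp hq => simp only [map_add, hp, hq]
  | mul_X p i hp => rw [map_mul, hp, aeval_X, map_mul, eval_X, map_mul]

lemma mu_sum {G : MP} {d : ℕ} (hG : G.IsHomogeneous d) {μ : Fin 2 →₀ ℕ}
    (hμ : μ ∈ G.support) : μ 0 + μ 1 = d := by
  have := hG (mem_support_iff.mp hμ)
  simpa [Finsupp.weight_apply, Finsupp.sum_fintype, Fin.sum_univ_two] using this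

lemma eval_pair (G : MP) (s r : ℂ) :
    eval ![s, r] G = ∑ μ ∈ G.support, coeff μ G * (s ^ (μ 0) * r ^ (μ 1)) := by
  conv_lhs => rw [G.as_sum]
  rw [map_sum]
  refine Finset.sum_congr rfl fun μ hμ => ?_
  rw [eval_monomial, Finsupp.prod_fintype _ _ (fun i => pow_zero _), Fin.prod_univ_two]
  simp

lemma homog_subst {H : MP} {d : ℕ} (hH : H.IsHomogeneous d) (Q : MP) (s r : ℂ) :
    aeval ![C s * Q, C r * Q] H = C (eval ![s, r] H) * Q ^ d := by
  conv_lhs => rw [H.as_sum]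
  rw [map_sum, eval_pair, map_sum, Finset.sum_mul]
  refine Finset.sum_congr rfl fun μ hμ => ?_
  have hd : μ 0 + μ 1 = d := mu_sum hH hμ
  rw [aeval_monomial, Finsupp.prod_fintype _ _ (fun i => pow_zero _), Fin.prod_univ_two]
  simp only [Matrix.cons_val_zero, Matrix.cons_val_one, Matrix.head_cons]
  rw [mul_pow, mul_pow, CCmap, map_mul, map_mul, map_pow, map_pow, ← hd, pow_add]
  ring

lemma eval_scale {H : MP} {d : ℕ} (hH : H.IsHomogeneous d) (s r c : ℂ) :
    eval ![s * c, r * c] H = eval ![s, r] H * c ^ d := by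
  have h1 := homog_subst hH (C c) s r
  have h2 : (![C s * C c, C r * C c] : Fin 2 → MP) = fun i => C (![s * c, r * c] i) := by
    funext i
    fin_cases i <;> simp [map_mul]
  rw [h2, aeval_C_comp] at h1
  have h3 : (C (eval ![s, r] H) * C c ^ d : MP) = C (eval ![s, r] H * c ^ d) := by
    rw [← map_pow, ← map_mul]
  rw [h3] at h1
  exact C_injective _ _ h1

lemma rootMult_eq {G : MP} (hG : G ≠ 0) (z : P1) :
    rootMult G z = multiplicity (linForm z) G := by
  have hf : FiniteMultiplicity (linForm z) G :=
    FiniteMultiplicity.of_not_isUnit (prime_linForm z).not_isUnit hG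
  rw [rootMult]
  have hset : {k : ℕ | linForm z ^ k ∣ G} = Set.Iic (multiplicity (linForm z) G) :=
    Set.ext fun k => hf.pow_dvd_iff_le_multiplicity
  rw [hset, csSup_Iic]

lemma rootMult_pow {G : MP} (hG : G ≠ 0) (z : P1) (m : ℕ) :
    rootMult (G ^ m) z = m * rootMult G z := by
  have hf : FiniteMultiplicity (linForm z) G :=
    FiniteMultiplicity.of_not_isUnit (prime_linForm z).not_isUnit hG
  rw [rootMult_eq (pow_ne_zero m hG) z, rootMult_eq hG z,
    hf.multiplicity_pow (prime_linForm z)]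

lemma rootMult_normalize (G : MP) (z : P1) :
    rootMult (normalize G) z = rootMult G z := by
  unfold rootMult
  congr 1
  exact Set.ext fun k => dvd_normalize_iff

lemma depth_zero_left (G : MP) (z : P1) : depthP ((0 : MP), G) z = rootMult G z := by
  unfold depthP Hgcd
  show rootMult (gcd 0 G) z = _
  rw [gcd_zero_left, rootMult_normalize]

lemma fhat_spec (f : MP × MP) :
    f.1 = Hgcd f * (fhat f).1 ∧ f.2 = Hgcd f * (fhat f).2 :=
  ⟨(dvd_def.mp (gcd_dvd_left f.1 f.2)).choose_spec,
   (dvd_def.mp (gcd_dvd_right f.1 f.2)).choose_spec⟩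

lemma fhatFun_mul_const {G : MP} (hG : G ≠ 0) (t : ℂ) (z : P1) :
    fhatFun ((C t * G : MP), G) z = ptc t := by
  set f : MP × MP := ((C t * G : MP), G) with hf
  obtain ⟨h1, h2⟩ := fhat_spec f
  have hGg : G ∣ Hgcd f := dvd_gcd ⟨C t, mul_comm _ _⟩ dvd_rfl
  obtain ⟨w, hw⟩ := hGg
  have hwc2 : w * (fhat f).2 = 1 := by
    apply mul_left_cancel₀ hG
    rw [mul_one, ← mul_assoc, ← hw]
    exact h2.symm
  have hwc1 : w * (fhat f).1 = C t := by
    apply mul_left_cancel₀ hG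
    rw [← mul_assoc, ← hw, ← h1]
    show C t * G = G * C t
    exact mul_comm _ _
  have e1 : eval z.rep w * eval z.rep (fhat f).1 = t := by
    have := congrArg (eval z.rep) hwc1
    simpa using this
  have e2 : eval z.rep w * eval z.rep (fhat f).2 = 1 := by
    have := congrArg (eval z.rep) hwc2
    simpa using this
  have he2 : eval z.rep (fhat f).2 ≠ 0 := by
    intro h
    rw [h, mul_zero] at e2
    exact zero_ne_one e2
  have hne : (![eval z.rep (fhat f).1, eval z.rep (fhat f).2] : Fin 2 → ℂ) ≠ 0 := by
    intro h
    exact he2 (by simpa using congrFun h 1)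
  show apply₁ (fhat f) z = ptc t
  rw [apply₁, dif_pos hne, ptc, Projectivization.mk_eq_mk_iff]
  refine ⟨Units.mk0 (eval z.rep (fhat f).2) he2, ?_⟩
  funext i
  fin_cases i
  · show (eval z.rep (fhat f).2) * t = eval z.rep (fhat f).1
    linear_combination eval z.rep (fhat f).1 * e2 - eval z.rep (fhat f).2 * e1
  · show (eval z.rep (fhat f).2) * 1 = eval z.rep (fhat f).2
    rw [mul_one]

lemma fhatFun_zero_left {G : MP} (hG : G ≠ 0) (z : P1) :
    fhatFun ((0 : MP), G) z = ptc 0 := by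
  have h : ((0 : MP), G) = ((C (0:ℂ) * G : MP), G) := by
    rw [map_zero, zero_mul]
  rw [h]
  exact fhatFun_mul_const hG 0 z

lemma not_Idet {G : MP} {d : ℕ} (hG : G ≠ 0) (hHom : G.IsHomogeneous d) (t : ℂ)
    (hne : eval ![t, 1] G ≠ 0) : ¬ Idet ((C t * G : MP), G) := by
  rintro ⟨c, hc, hole⟩
  have hct : c = ptc t := by rw [← hc (ptc 0), fhatFun_mul_const hG]
  subst hct
  have hdvd : linForm (ptc t) ∣ G := hole.trans (gcd_dvd_right _ _)
  obtain ⟨g, hg⟩ := hdvd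
  have heval : eval (ptc t).rep G = 0 := by
    rw [hg, map_mul, eval_rep_linForm, zero_mul]
  obtain ⟨a, ha⟩ := (Projectivization.mk_eq_mk_iff ℂ _ _ (Projectivization.rep_nonzero _)
    (by intro hcon; simpa using congrFun hcon 1)).mp (Projectivization.mk_rep (ptc t))
  have hrep : (ptc t).rep = ![t * (a : ℂ), 1 * (a : ℂ)] := by
    rw [← ha]
    funext i
    fin_cases i <;> simp [Units.smul_def, mul_comm]
  rw [hrep, eval_scale hHom] at heval
  exact (mul_ne_zero hne (pow_ne_zero _ a.ne_zero)) heval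

end Helpers

noncomputable section Helpers2

open MvPolynomial

lemma iter_form {H : MP} {d : ℕ} (hH : H.IsHomogeneous d) (t : ℂ)
    (hlam : eval ![t, 1] H ≠ 0) (k : ℕ) :
    ∃ c : ℂ, c ≠ 0 ∧
      iterPair ((C t * H : MP), H) (k + 1)
        = ((C c * (C t * H ^ d ^ k) : MP), (C c * H ^ d ^ k : MP)) := by
  induction k with
  | zero =>
    refine ⟨1, one_ne_zero, ?_⟩
    show comp2 _ (X 0, X 1) = _
    rw [comp2]
    simp only [aeval_XX, pow_zero, pow_one, map_one, one_mul]
  | succ k ih =>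
    obtain ⟨c, hc, hiter⟩ := ih
    refine ⟨eval ![t, 1] H * c ^ d, mul_ne_zero hlam (pow_ne_zero _ hc), ?_⟩
    show comp2 _ (iterPair _ (k + 1)) = _
    rw [hiter, comp2]
    have hvec : (![((C c * (C t * H ^ d ^ k) : MP), (C c * H ^ d ^ k : MP)).1,
        ((C c * (C t * H ^ d ^ k) : MP), (C c * H ^ d ^ k : MP)).2] : Fin 2 → MP)
        = ![C (c * t) * H ^ d ^ k, C c * H ^ d ^ k] := by
      funext i
      fin_cases i
      · show C c * (C t * H ^ d ^ k) = C (c * t) * H ^ d ^ k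
        rw [map_mul, mul_assoc]
      · rfl
    rw [hvec]
    have hA : aeval ![C (c * t) * H ^ d ^ k, C c * H ^ d ^ k] H
        = C (eval ![t, 1] H * c ^ d) * H ^ d ^ (k + 1) := by
      rw [homog_subst hH (H ^ d ^ k) (c * t) c]
      have : eval ![c * t, c] H = eval ![t, 1] H * c ^ d := by
        have := eval_scale hH t 1 c
        rw [show (![t * c, 1 * c] : Fin 2 → ℂ) = ![c * t, c] by
          funext i; fin_cases i <;> simp [mul_comm]] at this
        exact this
      rw [this, ← pow_mul, ← pow_succ]
    simp only [Prod.mk.injEq]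
    constructor
    · rw [map_mul, aeval_C, CCmap, hA]
      ring
    · rw [hA]

/-- The dehomogenization `q(T) = H(T,1)` as a univariate polynomial. -/
def dehom (G : MP) : Polynomial ℂ :=
  ∑ μ ∈ G.support, Polynomial.C (coeff μ G) * Polynomial.X ^ (μ 0)

lemma dehom_eval (G : MP) (t : ℂ) : (dehom G).eval t = eval ![t, 1] G := by
  rw [eval_pair, dehom, Polynomial.eval_finset_sum]
  refine Finset.sum_congr rfl fun μ hμ => ?_
  simp

lemma dehom_ne_zero {G : MP} {d : ℕ} (hHom : G.IsHomogeneous d) (hG : G ≠ 0) :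
    dehom G ≠ 0 := by
  obtain ⟨μ₀, hμ₀⟩ := (MvPolynomial.support_nonempty).mpr hG
  intro hq
  have hco : (dehom G).coeff (μ₀ 0) = coeff μ₀ G := by
    rw [dehom, Polynomial.finset_sum_coeff]
    rw [Finset.sum_eq_single μ₀]
    · simp
    · intro ν hν hne
      rw [Polynomial.coeff_C_mul, Polynomial.coeff_X_pow, if_neg, mul_zero]
      intro h0
      apply hne
      have h1 : ν 1 = μ₀ 1 := by
        have := mu_sum hHom hν
        have := mu_sum hHom hμ₀
        omega
      ext i
      fin_cases i
      · exact h0.symm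
      · exact h1
    · intro h
      exact absurd hμ₀ h
  rw [hq, Polynomial.coeff_zero] at hco
  exact (mem_support_iff.mp hμ₀) hco.symm

end Helpers2

/-- for stable `f = [0 : H] ∈ Rat_d^s ∩ I(d)` and `g_t = [tH : H]`:
`g_t → f`; for all but finitely many `t ≠ 0`, `g_t ∉ I(d)` and
`g_t^n = H^{dⁿ⁻¹}·[t : 1]` projectively; `g_t^n → g_n = [0 : H^{dⁿ⁻¹}]`, which is
stable with `d_{[0:1]}(g_n) = dⁿ⁻¹·d_{[0:1]}(f)`. -/
theorem statement17 (d n : ℕ) (hd : 4 ≤ d) (hn : 2 ≤ n) (H : MP)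
    (hH : H.IsHomogeneous d) (hH0 : H ≠ 0) (hzero : eval ![(0 : ℂ), 1] H = 0)
    (hst : Stable d ((0 : MP), H)) :
    -- (i) g_t → f as t → 0
    (∀ μ : Fin 2 →₀ ℕ,
      Tendsto (fun t : ℂ => (coeff μ (C t * H), coeff μ H)) (𝓝[≠] (0 : ℂ))
        (𝓝 (coeff μ (0 : MP), coeff μ H))) ∧
    -- (ii) for all but finitely many t ≠ 0, g_t ∉ I(d) and g_t^n = H^{dⁿ⁻¹}·[t : 1]
    (∃ S : Set ℂ, S.Finite ∧ ∀ t : ℂ, t ∉ S → t ≠ 0 →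
      ¬ Idet ((C t * H : MP), H) ∧
      ProjEq ((C t * H ^ d ^ (n - 1) : MP), (H ^ d ^ (n - 1) : MP))
        (iterPair ((C t * H : MP), H) n)) ∧
    -- (iii) g_t^n → g_n as t → 0
    (∀ μ : Fin 2 →₀ ℕ,
      Tendsto (fun t : ℂ => (coeff μ (C t * H ^ d ^ (n - 1)), coeff μ (H ^ d ^ (n - 1))))
        (𝓝[≠] (0 : ℂ))
        (𝓝 (coeff μ (0 : MP), coeff μ (H ^ d ^ (n - 1))))) ∧
    -- (iv) g_n is stable, with depth dⁿ⁻¹·d_{[0:1]}(f) at [0:1]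
    Stable (d ^ n) ((0 : MP), (H ^ d ^ (n - 1) : MP)) ∧
    depthP ((0 : MP), (H ^ d ^ (n - 1) : MP)) (ptc 0)
      = d ^ (n - 1) * depthP ((0 : MP), H) (ptc 0) := by
  have key_tendsto : ∀ (G : MP) (μ : Fin 2 →₀ ℕ),
      Tendsto (fun t : ℂ => (coeff μ (C t * G), coeff μ G)) (𝓝[≠] (0 : ℂ))
        (𝓝 (coeff μ (0 : MP), coeff μ G)) := by
    intro G μ
    simp only [coeff_C_mul, coeff_zero]
    refine Tendsto.prodMk_nhds ?_ tendsto_const_nhds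
    have h1 : Tendsto (fun t : ℂ => t * coeff μ G) (𝓝 0) (𝓝 0) := by
      simpa using (continuous_mul_right (coeff μ G)).tendsto (0 : ℂ)
    exact h1.mono_left nhdsWithin_le_nhds
  have hm0 : (H ^ d ^ (n - 1) : MP) ≠ 0 := pow_ne_zero _ hH0
  have hdQ : (4 : ℚ) ≤ (d : ℚ) := by exact_mod_cast hd
  have hm1 : (1 : ℚ) ≤ (d : ℚ) ^ (n - 1) := one_le_pow₀ (by linarith)
  have hdm : ((d : ℚ)) ^ n = (d : ℚ) ^ (n - 1) * (d : ℚ) := by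
    rw [← pow_succ]
    congr 1
    omega
  refine ⟨fun μ => key_tendsto H μ, ?_, fun μ => key_tendsto (H ^ d ^ (n - 1)) μ, ?_, ?_⟩
  · refine ⟨{t : ℂ | (dehom H).IsRoot t},
      Polynomial.finite_setOf_isRoot (dehom_ne_zero hH hH0), ?_⟩
    intro t hS ht0
    have hlam : eval ![t, 1] H ≠ 0 := by
      intro h
      exact hS (by simpa [Polynomial.IsRoot, dehom_eval] using h)
    refine ⟨not_Idet hH0 hH t hlam, ?_⟩
    obtain ⟨c, hc, hiter⟩ := iter_form hH t hlam (n - 1)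
    rw [show n - 1 + 1 = n by omega] at hiter
    exact ⟨c, hc, hiter⟩
  · constructor
    · intro z
      rw [depth_zero_left, rootMult_pow hH0]
      have h1 := hst.1 z
      rw [depth_zero_left] at h1
      push_cast
      rw [hdm]
      have h2 := mul_le_mul_of_nonneg_left h1
        (pow_nonneg (by linarith : (0:ℚ) ≤ (d:ℚ)) (n - 1))
      linarith
    · intro h hineq
      rw [fhatFun_zero_left hm0]
      have h2 := hst.2 h
      rw [fhatFun_zero_left hH0] at h2
      apply h2
      rw [depth_zero_left]
      rw [depth_zero_left, rootMult_pow hH0] at hineq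
      push_cast at hineq ⊢
      rw [hdm] at hineq
      have hr0 : (0 : ℚ) ≤ (rootMult H h : ℚ) := Nat.cast_nonneg _
      have key : (d:ℚ) ^ (n-1) * (((d:ℚ) - 1) / 2) ≤ (d:ℚ) ^ (n-1) * (rootMult H h : ℚ) := by
        nlinarith [hineq, hm1]
      have hMpos : (0 : ℚ) < (d:ℚ) ^ (n-1) := by linarith
      exact (mul_le_mul_iff_right₀ hMpos).mp key
  · rw [depth_zero_left, depth_zero_left, rootMult_pow hH0]
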